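/- For real B₁, B₂ ≥ 1, the number of matrices in SL₂(𝔽_q[T]) whose first column has both entries of absolute value at most B₁ and whose second column has both entries of absolute value at most B₂ is O(B₁·B₂), with the implied constant depending only on q. -/

import Mathlib

open Polynomial Filter
open scoped Classical ENNReal

noncomputable section

variable (Fq : Type) [Field Fq] [Fintype Fq]

/-- The element `T` inside the Laurent-series field `𝔽_q((T⁻¹))`, which we realize
as the field of Hahn/Laurent series in the variable `T⁻¹`. -/
def Tel : LaurentSeries Fq := HahnSeries.single (-1 : ℤ) 1

/-- The inverse variable `T⁻¹` itself. -/
def TinvEl : LaurentSeries Fq := HahnSeries.single (1 : ℤ) 1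

/-- The embedding of the polynomial ring `𝔽_q[T]` into `𝔽_q((T⁻¹))`,
sending `T` to `Tel`. -/
def polyToL (P : Polynomial Fq) : LaurentSeries Fq :=
  Polynomial.eval₂ HahnSeries.C (Tel Fq) P

/-- The absolute value `|x| = q ^ (deg x)` on `𝔽_q((T⁻¹))`, with `|0| = 0`.
Here the degree of `x ≠ 0` is minus the order of `x` as a series in `T⁻¹`. -/
def labs (x : LaurentSeries Fq) : ℝ :=
  if x = 0 then 0 else (Fintype.card Fq : ℝ) ^ (-x.order)

/-- `‖x‖`: the distance from `x` to the nearest polynomial. -/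
def lnorm (x : LaurentSeries Fq) : ℝ :=
  ⨅ P : Polynomial Fq, labs Fq (x - polyToL Fq P)

/-- `x ∈ 𝔽_q(T)`, i.e. `x` is rational. -/
def IsRat (x : LaurentSeries Fq) : Prop :=
  ∃ P Q : Polynomial Fq, Q ≠ 0 ∧ polyToL Fq Q * x = polyToL Fq P


/-- `SL₂(𝔽_q[T])`. -/
abbrev SL2 := Matrix.SpecialLinearGroup (Fin 2) (Polynomial Fq)

/-- Maximum of the absolute values of the entries of a `2 × 2` matrix. -/
def matAbs (M : Matrix (Fin 2) (Fin 2) (LaurentSeries Fq)) : ℝ :=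
  max (max (labs Fq (M 0 0)) (labs Fq (M 0 1))) (max (labs Fq (M 1 0)) (labs Fq (M 1 1)))

/-- The size `|γ|` of a matrix `γ ∈ SL₂(𝔽_q[T])`. -/
def gabs (γ : SL2 Fq) : ℝ :=
  matAbs Fq (((γ : Matrix (Fin 2) (Fin 2) (Polynomial Fq))).map (polyToL Fq))

/-- Maximum of the absolute values of the coordinates of a vector. -/
def vabs (v : Fin 2 → LaurentSeries Fq) : ℝ :=
  max (labs Fq (v 0)) (labs Fq (v 1))

/-- The standard linear action of `SL₂(𝔽_q[T])` on `𝔽_q((T⁻¹))²`. -/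
def act (γ : SL2 Fq) (v : Fin 2 → LaurentSeries Fq) : Fin 2 → LaurentSeries Fq :=
  (((γ : Matrix (Fin 2) (Fin 2) (Polynomial Fq))).map (polyToL Fq)).mulVec v

/-- The asymptotic Diophantine exponent `μ(x, y)` (as an element of `ℝ≥0∞`). -/
def muExp (x y : Fin 2 → LaurentSeries Fq) : ℝ≥0∞ :=
  ⨆ m ∈ {m : ℝ |
      {γ : SL2 Fq | vabs Fq (act Fq γ x - y) ≤ gabs Fq γ ^ (-m)}.Infinite},
    ENNReal.ofReal m

/-- The uniform Diophantine exponent `μ̂(x, y)` (as an element of `ℝ≥0∞`). -/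
def muHatExp (x y : Fin 2 → LaurentSeries Fq) : ℝ≥0∞ :=
  ⨆ m ∈ {m : ℝ | ∀ᶠ H : ℝ in atTop, ∃ γ : SL2 Fq,
      gabs Fq γ ≤ H ∧ vabs Fq (act Fq γ x - y) ≤ H ^ (-m)},
    ENNReal.ofReal m

/-- The irrationality exponent `ω(ξ)` (as an element of `ℝ≥0∞`). -/
def omegaExp (ξ : LaurentSeries Fq) : ℝ≥0∞ :=
  ⨆ w ∈ {w : ℝ |
      {Q : Polynomial Fq | Q ≠ 0 ∧
        lnorm Fq (polyToL Fq Q * ξ) ≤ labs Fq (polyToL Fq Q) ^ (-w)}.Infinite},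
    ENNReal.ofReal w


/-- The set of matrices in `SL₂(𝔽_q[T])` whose first column is bounded by `B1`
and whose second column is bounded by `B2`. -/
def bddSL2 (B1 B2 : ℝ) : Set (SL2 Fq) :=
  {γ : SL2 Fq |
    (labs Fq (polyToL Fq ((γ : Matrix (Fin 2) (Fin 2) (Polynomial Fq)) 0 0)) ≤ B1 ∧
      labs Fq (polyToL Fq ((γ : Matrix (Fin 2) (Fin 2) (Polynomial Fq)) 1 0)) ≤ B1) ∧
    (labs Fq (polyToL Fq ((γ : Matrix (Fin 2) (Fin 2) (Polynomial Fq)) 0 1)) ≤ B2 ∧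
      labs Fq (polyToL Fq ((γ : Matrix (Fin 2) (Fin 2) (Polynomial Fq)) 1 1)) ≤ B2)}

-- ===== auxiliary material for stmt19 =====

section Stmt19Aux

set_option linter.unusedSectionVars false

lemma polyToL_eq_sum (P : Polynomial Fq) :
    polyToL Fq P = ∑ i ∈ Finset.range (P.natDegree + 1),
      HahnSeries.single (-(i : ℤ)) (P.coeff i) := by
  rw [polyToL, Polynomial.eval₂_eq_sum_range]
  refine Finset.sum_congr rfl fun i _ => ?_
  rw [Tel, HahnSeries.single_pow, HahnSeries.C_apply, HahnSeries.single_mul_single]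
  simp

lemma polyToL_coeff_neg (P : Polynomial Fq) (n : ℕ) :
    (polyToL Fq P).coeff (-(n : ℤ)) = P.coeff n := by
  classical
  rw [polyToL_eq_sum]
  rw [show (∑ i ∈ Finset.range (P.natDegree+1),
        HahnSeries.single (-(i:ℤ)) (P.coeff i)).coeff (-(n:ℤ))
      = ∑ i ∈ Finset.range (P.natDegree+1),
        (HahnSeries.single (-(i:ℤ)) (P.coeff i)).coeff (-(n:ℤ))
    from map_sum (HahnSeries.coeff.addMonoidHom (-(n:ℤ))) _ _]
  simp only [HahnSeries.coeff_single, neg_inj, Nat.cast_inj]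
  rw [Finset.sum_ite_eq]
  split
  · rfl
  · rename_i h
    rw [Finset.mem_range] at h
    exact (Polynomial.coeff_eq_zero_of_natDegree_lt (by omega)).symm

lemma polyToL_coeff_lt (P : Polynomial Fq) {z : ℤ} (hz : z < -(P.natDegree : ℤ)) :
    (polyToL Fq P).coeff z = 0 := by
  classical
  rw [polyToL_eq_sum]
  rw [show (∑ i ∈ Finset.range (P.natDegree+1),
        HahnSeries.single (-(i:ℤ)) (P.coeff i)).coeff z
      = ∑ i ∈ Finset.range (P.natDegree+1),
        (HahnSeries.single (-(i:ℤ)) (P.coeff i)).coeff z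
    from map_sum (HahnSeries.coeff.addMonoidHom z) _ _]
  refine Finset.sum_eq_zero fun i hi => ?_
  rw [Finset.mem_range] at hi
  rw [HahnSeries.coeff_single, if_neg]
  intro h
  omega

lemma polyToL_ne_zero {P : Polynomial Fq} (hP : P ≠ 0) : polyToL Fq P ≠ 0 := by
  intro h
  have := polyToL_coeff_neg Fq P P.natDegree
  rw [h] at this
  simp only [HahnSeries.coeff_zero] at this
  exact hP (Polynomial.leadingCoeff_eq_zero.mp this.symm)

lemma order_polyToL {P : Polynomial Fq} (hP : P ≠ 0) :
    (polyToL Fq P).order = -(P.natDegree : ℤ) := by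
  apply le_antisymm
  · apply HahnSeries.order_le_of_coeff_ne_zero
    rw [polyToL_coeff_neg]
    exact mt Polynomial.leadingCoeff_eq_zero.mp hP
  · by_contra h
    push_neg at h
    exact (mt HahnSeries.coeff_order_eq_zero.mp (polyToL_ne_zero Fq hP)) (polyToL_coeff_lt Fq P h)

lemma labs_polyToL {P : Polynomial Fq} (hP : P ≠ 0) :
    labs Fq (polyToL Fq P) = (Fintype.card Fq : ℝ) ^ (P.natDegree : ℕ) := by
  rw [labs, if_neg (polyToL_ne_zero Fq hP), order_polyToL Fq hP, neg_neg, zpow_natCast]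

lemma natDeg_le_floor {P : Polynomial Fq} {B : ℝ} (hB : 0 < B)
    (h : labs Fq (polyToL Fq P) ≤ B) :
    P.natDegree ≤ Nat.floor (Real.logb (Fintype.card Fq) B) := by
  rcases eq_or_ne P 0 with h0 | h0
  · simp [h0]
  · have hq : (1:ℝ) < (Fintype.card Fq : ℝ) := by exact_mod_cast Fintype.one_lt_card
    rw [labs_polyToL Fq h0] at h
    apply Nat.le_floor
    rw [Real.le_logb_iff_rpow_le hq hB, Real.rpow_natCast]
    exact h

lemma pow_floor_le {B : ℝ} (hB : 1 ≤ B) :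
    (Fintype.card Fq : ℝ) ^ (Nat.floor (Real.logb (Fintype.card Fq) B)) ≤ B := by
  have hq : (1:ℝ) < (Fintype.card Fq : ℝ) := by exact_mod_cast Fintype.one_lt_card
  have h0 : (0:ℝ) < B := by linarith
  calc (Fintype.card Fq : ℝ) ^ (Nat.floor (Real.logb (Fintype.card Fq) B))
      = (Fintype.card Fq : ℝ) ^ ((Nat.floor (Real.logb (Fintype.card Fq) B) : ℝ)) :=
        (Real.rpow_natCast _ _).symm
    _ ≤ (Fintype.card Fq : ℝ) ^ (Real.logb (Fintype.card Fq) B) := by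
        apply (Real.rpow_le_rpow_left_iff hq).mpr
        exact Nat.floor_le (Real.logb_nonneg hq hB)
    _ = B := Real.rpow_logb (by linarith) (ne_of_gt hq) h0

lemma labs_neg (x : LaurentSeries Fq) : labs Fq (-x) = labs Fq x := by
  rcases eq_or_ne x 0 with h | h
  · simp [h]
  · rw [labs, labs, if_neg h, if_neg (by simpa using h), HahnSeries.order_neg]

lemma polyToL_neg (p : Polynomial Fq) : polyToL Fq (-p) = -polyToL Fq p := by
  simp [polyToL, Polynomial.eval₂_neg]

instance fintypeDegreeLT (m : ℕ) : Fintype (Polynomial.degreeLT Fq m) :=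
  Fintype.ofEquiv (Fin m → Fq) (Polynomial.degreeLTEquiv Fq m).toEquiv.symm

lemma card_degreeLT (m : ℕ) :
    Fintype.card (Polynomial.degreeLT Fq m) = Fintype.card Fq ^ m := by
  rw [Fintype.card_congr (Polynomial.degreeLTEquiv Fq m).toEquiv]
  simp [Fintype.card_fun]

def polyLT (m : ℕ) : Finset (Polynomial Fq) :=
  Finset.image Subtype.val (Finset.univ : Finset (Polynomial.degreeLT Fq m))

lemma mem_polyLT {m : ℕ} {p : Polynomial Fq} :
    p ∈ polyLT Fq m ↔ p ∈ Polynomial.degreeLT Fq m := by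
  simp [polyLT]

lemma card_polyLT (m : ℕ) : (polyLT Fq m).card = Fintype.card Fq ^ m := by
  rw [polyLT, Finset.card_image_of_injective _ Subtype.val_injective,
    Finset.card_univ, card_degreeLT]

lemma mem_degreeLT_of_natDeg_le {p : Polynomial Fq} {m : ℕ} (h : p.natDegree ≤ m) :
    p ∈ Polynomial.degreeLT Fq (m + 1) := by
  rw [Polynomial.mem_degreeLT]
  rcases eq_or_ne p 0 with h0 | h0
  · rw [h0, Polynomial.degree_zero]
    exact bot_lt_iff_ne_bot.mpr (by simp)
  · exact_mod_cast (Polynomial.natDegree_lt_iff_degree_lt h0).mp (Nat.lt_succ_of_le h)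

lemma geomsum_le {q : ℕ} (hq : 2 ≤ q) (n : ℕ) :
    ∑ k ∈ Finset.range (n + 1), q ^ k ≤ q ^ (n + 1) := by
  induction n with
  | zero => simpa using hq.trans' (by norm_num)
  | succ n ih =>
    rw [Finset.sum_range_succ]
    have h1 : q ^ (n+1) + q ^ (n+1) ≤ q ^ (n+1+1) := by
      have : 2 * q ^ (n+1) ≤ q * q ^ (n+1) := Nat.mul_le_mul_right _ hq
      calc q ^ (n+1) + q ^ (n+1) = 2 * q ^ (n+1) := by ring
        _ ≤ q * q ^ (n+1) := this
        _ = q ^ (n+1+1) := by ring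
    omega

def ent (γ : SL2 Fq) (i j : Fin 2) : Polynomial Fq :=
  (γ : Matrix (Fin 2) (Fin 2) (Polynomial Fq)) i j

lemma det2 (γ : SL2 Fq) :
    ent Fq γ 0 0 * ent Fq γ 1 1 - ent Fq γ 0 1 * ent Fq γ 1 0 = 1 := by
  have h := γ.2
  rw [Matrix.det_fin_two] at h
  exact h

lemma SL2_ext {γ δ : SL2 Fq} (h00 : ent Fq γ 0 0 = ent Fq δ 0 0)
    (h01 : ent Fq γ 0 1 = ent Fq δ 0 1) (h10 : ent Fq γ 1 0 = ent Fq δ 1 0)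
    (h11 : ent Fq γ 1 1 = ent Fq δ 1 1) : γ = δ := by
  apply Subtype.ext
  apply Matrix.ext
  intro i j
  fin_cases i <;> fin_cases j <;>
    first | exact h00 | exact h01 | exact h10 | exact h11

lemma mem_bddSL2 {B1 B2 : ℝ} {γ : SL2 Fq} :
    γ ∈ bddSL2 Fq B1 B2 ↔
      (labs Fq (polyToL Fq (ent Fq γ 0 0)) ≤ B1 ∧
        labs Fq (polyToL Fq (ent Fq γ 1 0)) ≤ B1) ∧
      (labs Fq (polyToL Fq (ent Fq γ 0 1)) ≤ B2 ∧
        labs Fq (polyToL Fq (ent Fq γ 1 1)) ≤ B2) := Iff.rfl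

def baseFun (B1 B2 : ℝ) (p : Polynomial Fq × Polynomial Fq) :
    Polynomial Fq × Polynomial Fq :=
  if h : ∃ γ : SL2 Fq, γ ∈ bddSL2 Fq B1 B2 ∧ ent Fq γ 0 0 = p.1 ∧ ent Fq γ 1 0 = p.2
  then (ent Fq h.choose 0 1, ent Fq h.choose 1 1)
  else 0

def tFun (B1 B2 : ℝ) (γ : SL2 Fq) : Polynomial Fq :=
  ent Fq γ 0 1 * (baseFun Fq B1 B2 (ent Fq γ 0 0, ent Fq γ 1 0)).2
    - ent Fq γ 1 1 * (baseFun Fq B1 B2 (ent Fq γ 0 0, ent Fq γ 1 0)).1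

lemma tFun_spec (B1 B2 : ℝ) {γ : SL2 Fq} (hγ : γ ∈ bddSL2 Fq B1 B2) :
    ∃ b0 d0 : Polynomial Fq,
      baseFun Fq B1 B2 (ent Fq γ 0 0, ent Fq γ 1 0) = (b0, d0) ∧
      labs Fq (polyToL Fq b0) ≤ B2 ∧ labs Fq (polyToL Fq d0) ≤ B2 ∧
      tFun Fq B1 B2 γ * ent Fq γ 0 0 = ent Fq γ 0 1 - b0 ∧
      tFun Fq B1 B2 γ * ent Fq γ 1 0 = ent Fq γ 1 1 - d0 := by
  have h : ∃ δ : SL2 Fq, δ ∈ bddSL2 Fq B1 B2 ∧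
      ent Fq δ 0 0 = ent Fq γ 0 0 ∧ ent Fq δ 1 0 = ent Fq γ 1 0 := ⟨γ, hγ, rfl, rfl⟩
  have hbase : baseFun Fq B1 B2 (ent Fq γ 0 0, ent Fq γ 1 0)
      = (ent Fq h.choose 0 1, ent Fq h.choose 1 1) := dif_pos h
  obtain ⟨hδ, h00, h10⟩ := h.choose_spec
  refine ⟨ent Fq h.choose 0 1, ent Fq h.choose 1 1, hbase, hδ.2.1, hδ.2.2, ?_, ?_⟩
  · have hdetγ := det2 Fq γ
    have hdetδ := det2 Fq h.choose
    rw [h00, h10] at hdetδ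
    rw [tFun, hbase]
    linear_combination ent Fq γ 0 1 * hdetδ - ent Fq h.choose 0 1 * hdetγ
  · have hdetγ := det2 Fq γ
    have hdetδ := det2 Fq h.choose
    rw [h00, h10] at hdetδ
    rw [tFun, hbase]
    linear_combination ent Fq γ 1 1 * hdetδ - ent Fq h.choose 1 1 * hdetγ

lemma key (B1 B2 : ℝ) (h1 : 1 ≤ B1) (h2 : 1 ≤ B2) (h12 : B1 ≤ B2) :
    (bddSL2 Fq B1 B2).Finite ∧
    (Nat.card (bddSL2 Fq B1 B2) : ℝ) ≤ (Fintype.card Fq : ℝ) ^ 4 * B1 * B2 := by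
  classical
  have hq2 : 2 ≤ Fintype.card Fq := Fintype.one_lt_card
  have hB1pos : (0:ℝ) < B1 := lt_of_lt_of_le one_pos h1
  have hB2pos : (0:ℝ) < B2 := lt_of_lt_of_le one_pos h2
  set q := Fintype.card Fq with hqdef
  set n1 := Nat.floor (Real.logb q B1) with hn1def
  set n2 := Nat.floor (Real.logb q B2) with hn2def
  have hq1 : (1:ℝ) < (q : ℝ) := by exact_mod_cast hq2
  have hn12 : n1 ≤ n2 := by
    apply Nat.floor_le_floor
    exact Real.logb_le_logb_of_le hq1 hB1pos h12
  have hdeg : ∀ γ ∈ bddSL2 Fq B1 B2,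
      (ent Fq γ 0 0).natDegree ≤ n1 ∧ (ent Fq γ 1 0).natDegree ≤ n1 ∧
      (ent Fq γ 0 1).natDegree ≤ n2 ∧ (ent Fq γ 1 1).natDegree ≤ n2 := by
    intro γ hγ
    obtain ⟨⟨ha, hc⟩, hb, hd⟩ := (mem_bddSL2 Fq).mp hγ
    exact ⟨natDeg_le_floor Fq hB1pos ha, natDeg_le_floor Fq hB1pos hc,
      natDeg_le_floor Fq hB2pos hb, natDeg_le_floor Fq hB2pos hd⟩
  have hfinT : Finite ↥(bddSL2 Fq B1 B2) := by
    apply Finite.of_injective (fun γ : ↥(bddSL2 Fq B1 B2) =>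
      ((⟨ent Fq γ 0 0, mem_degreeLT_of_natDeg_le Fq (hdeg γ γ.2).1⟩ :
          Polynomial.degreeLT Fq (n1+1)),
       (⟨ent Fq γ 1 0, mem_degreeLT_of_natDeg_le Fq (hdeg γ γ.2).2.1⟩ :
          Polynomial.degreeLT Fq (n1+1)),
       (⟨ent Fq γ 0 1, mem_degreeLT_of_natDeg_le Fq (hdeg γ γ.2).2.2.1⟩ :
          Polynomial.degreeLT Fq (n2+1)),
       (⟨ent Fq γ 1 1, mem_degreeLT_of_natDeg_le Fq (hdeg γ γ.2).2.2.2⟩ :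
          Polynomial.degreeLT Fq (n2+1))))
    intro x y hxy
    simp only [Prod.mk.injEq, Subtype.mk.injEq] at hxy
    obtain ⟨e1, e2, e3, e4⟩ := hxy
    exact Subtype.ext (SL2_ext Fq e1 e3 e2 e4)
  have hfin : (bddSL2 Fq B1 B2).Finite := Set.toFinite _
  refine ⟨hfin, ?_⟩
  have hcardS : Nat.card ↥(bddSL2 Fq B1 B2) = hfin.toFinset.card := by
    rw [Nat.card_coe_set_eq, Set.ncard_eq_toFinset_card _ hfin]
  set S := hfin.toFinset with hSdef
  have hfiber : S.card = ∑ k ∈ Finset.range (n1+1),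
      (S.filter fun γ =>
        max (ent Fq γ 0 0).natDegree (ent Fq γ 1 0).natDegree = k).card := by
    apply Finset.card_eq_sum_card_fiberwise
    intro γ hγ
    rw [Finset.mem_coe, hSdef, Set.Finite.mem_toFinset] at hγ
    have h := hdeg γ hγ
    exact Finset.mem_range.mpr (Nat.lt_succ_of_le (max_le h.1 h.2.1))
  have hstep : ∀ k ∈ Finset.range (n1+1),
      (S.filter fun γ =>
        max (ent Fq γ 0 0).natDegree (ent Fq γ 1 0).natDegree = k).card
      ≤ q ^ (k + n2 + 3) := by
    intro k hk
    rw [Finset.mem_range] at hk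
    have hk2 : k ≤ n2 := le_trans (by omega) hn12
    have hinj := Finset.card_le_card_of_injOn
      (fun γ : SL2 Fq => (ent Fq γ 0 0, ent Fq γ 1 0, tFun Fq B1 B2 γ))
      (t := polyLT Fq (k+1) ×ˢ polyLT Fq (k+1) ×ˢ polyLT Fq (n2+1-k))
      (s := S.filter fun γ =>
        max (ent Fq γ 0 0).natDegree (ent Fq γ 1 0).natDegree = k)
      ?_ ?_
    · calc (S.filter fun γ =>
            max (ent Fq γ 0 0).natDegree (ent Fq γ 1 0).natDegree = k).card
          ≤ (polyLT Fq (k+1) ×ˢ polyLT Fq (k+1) ×ˢ polyLT Fq (n2+1-k)).card := hinj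
        _ = q^(k+1) * (q^(k+1) * q^(n2+1-k)) := by
            rw [Finset.card_product, Finset.card_product, card_polyLT, card_polyLT, hqdef]
        _ = q^(k+n2+3) := by rw [← pow_add, ← pow_add]; congr 1; omega
    · intro γ hγ
      rw [Finset.mem_coe, Finset.mem_filter, hSdef, Set.Finite.mem_toFinset] at hγ
      obtain ⟨hγS, hkeq⟩ := hγ
      have hd := hdeg γ hγS
      simp only [Finset.mem_coe, Finset.mem_product]
      refine ⟨?_, ?_, ?_⟩
      · rw [mem_polyLT]
        exact mem_degreeLT_of_natDeg_le Fq (le_trans (le_max_left _ _) hkeq.le)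
      · rw [mem_polyLT]
        exact mem_degreeLT_of_natDeg_le Fq (le_trans (le_max_right _ _) hkeq.le)
      · obtain ⟨b0, d0, hbase, hb0, hd0, hta, htc⟩ := tFun_spec Fq B1 B2 hγS
        rcases eq_or_ne (tFun Fq B1 B2 γ) 0 with ht | ht
        · rw [mem_polyLT, Polynomial.mem_degreeLT, ht, Polynomial.degree_zero]
          exact bot_lt_iff_ne_bot.mpr (by simp)
        · have hb0' : b0.natDegree ≤ n2 := natDeg_le_floor Fq hB2pos hb0
          have hd0' : d0.natDegree ≤ n2 := natDeg_le_floor Fq hB2pos hd0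
          have hbb : (ent Fq γ 0 1 - b0).natDegree ≤ n2 :=
            le_trans (Polynomial.natDegree_sub_le _ _) (max_le hd.2.2.1 hb0')
          have hdd : (ent Fq γ 1 1 - d0).natDegree ≤ n2 :=
            le_trans (Polynomial.natDegree_sub_le _ _) (max_le hd.2.2.2 hd0')
          have hne : ¬(ent Fq γ 0 0 = 0 ∧ ent Fq γ 1 0 = 0) := by
            rintro ⟨hA, hC⟩
            have hD := det2 Fq γ
            rw [hA, hC] at hD
            simp at hD
          have hxbd : (tFun Fq B1 B2 γ).natDegree + k ≤ n2 := by
            by_cases hA : ent Fq γ 0 0 = 0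
            · have hC : ent Fq γ 1 0 ≠ 0 := fun hC => hne ⟨hA, hC⟩
              have hxk : (ent Fq γ 1 0).natDegree = k := by
                rw [← hkeq, hA]; simp
              calc (tFun Fq B1 B2 γ).natDegree + k
                  = (tFun Fq B1 B2 γ * ent Fq γ 1 0).natDegree := by
                    rw [Polynomial.natDegree_mul ht hC, hxk]
                _ ≤ n2 := by rw [htc]; exact hdd
            · by_cases hAC : (ent Fq γ 1 0).natDegree ≤ (ent Fq γ 0 0).natDegree
              · have hxk : (ent Fq γ 0 0).natDegree = k := by
                  rw [← hkeq]; exact (max_eq_left hAC).symm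
                calc (tFun Fq B1 B2 γ).natDegree + k
                    = (tFun Fq B1 B2 γ * ent Fq γ 0 0).natDegree := by
                      rw [Polynomial.natDegree_mul ht hA, hxk]
                  _ ≤ n2 := by rw [hta]; exact hbb
              · have hC : ent Fq γ 1 0 ≠ 0 := by
                  intro hC
                  rw [hC] at hAC
                  simp at hAC
                have hxk : (ent Fq γ 1 0).natDegree = k := by
                  rw [← hkeq]; exact (max_eq_right (le_of_not_ge hAC)).symm
                calc (tFun Fq B1 B2 γ).natDegree + k
                    = (tFun Fq B1 B2 γ * ent Fq γ 1 0).natDegree := by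
                      rw [Polynomial.natDegree_mul ht hC, hxk]
                  _ ≤ n2 := by rw [htc]; exact hdd
          rw [mem_polyLT, show n2 + 1 - k = (n2 - k) + 1 by omega]
          exact mem_degreeLT_of_natDeg_le Fq (by omega)
    · intro γ hγ δ hδ heq
      rw [Finset.mem_coe, Finset.mem_filter, hSdef, Set.Finite.mem_toFinset] at hγ hδ
      simp only [Prod.mk.injEq] at heq
      obtain ⟨e00, e10, et⟩ := heq
      obtain ⟨b0, d0, hbase, _, _, hta, htc⟩ := tFun_spec Fq B1 B2 hγ.1
      obtain ⟨b0', d0', hbase', _, _, hta', htc'⟩ := tFun_spec Fq B1 B2 hδ.1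
      rw [e00, e10, hbase'] at hbase
      have hb00 : b0' = b0 := (Prod.mk.injEq _ _ _ _ ▸ hbase).1
      have hd00 : d0' = d0 := (Prod.mk.injEq _ _ _ _ ▸ hbase).2
      apply SL2_ext Fq e00 ?_ e10 ?_
      · have hγb : ent Fq γ 0 1 = tFun Fq B1 B2 γ * ent Fq γ 0 0 + b0 := by
          linear_combination -hta
        have hδb : ent Fq δ 0 1 = tFun Fq B1 B2 δ * ent Fq δ 0 0 + b0' := by
          linear_combination -hta'
        rw [hγb, hδb, e00, et, hb00]
      · have hγd : ent Fq γ 1 1 = tFun Fq B1 B2 γ * ent Fq γ 1 0 + d0 := by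
          linear_combination -htc
        have hδd : ent Fq δ 1 1 = tFun Fq B1 B2 δ * ent Fq δ 1 0 + d0' := by
          linear_combination -htc'
        rw [hγd, hδd, e10, et, hd00]
  have hsum : S.card ≤ q ^ (n1 + n2 + 4) := by
    rw [hfiber]
    calc ∑ k ∈ Finset.range (n1+1), (S.filter fun γ =>
            max (ent Fq γ 0 0).natDegree (ent Fq γ 1 0).natDegree = k).card
        ≤ ∑ k ∈ Finset.range (n1+1), q ^ (k + n2 + 3) := Finset.sum_le_sum hstep
      _ = q ^ (n2+3) * ∑ k ∈ Finset.range (n1+1), q ^ k := by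
          rw [Finset.mul_sum]
          exact Finset.sum_congr rfl fun k _ => by ring
      _ ≤ q ^ (n2+3) * q ^ (n1+1) := Nat.mul_le_mul_left _ (geomsum_le hq2 n1)
      _ = q ^ (n1 + n2 + 4) := by rw [← pow_add]; congr 1; omega
  rw [hcardS]
  have hqn1 : ((q:ℝ)) ^ n1 ≤ B1 := pow_floor_le Fq h1
  have hqn2 : ((q:ℝ)) ^ n2 ≤ B2 := pow_floor_le Fq h2
  calc (S.card : ℝ) ≤ (q:ℝ) ^ (n1 + n2 + 4) := by exact_mod_cast hsum
    _ = (q:ℝ)^4 * ((q:ℝ)^n1 * (q:ℝ)^n2) := by rw [pow_add, pow_add]; ring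
    _ ≤ (q:ℝ)^4 * (B1 * B2) := by
        apply mul_le_mul_of_nonneg_left _ (by positivity)
        exact mul_le_mul hqn1 hqn2 (by positivity) (by linarith)
    _ = (q:ℝ)^4 * B1 * B2 := by ring

def omega2 : SL2 Fq :=
  ⟨!![0, -1; 1, 0], by simp [Matrix.det_fin_two]⟩

lemma bddSL2_symm (B1 B2 : ℝ) :
    bddSL2 Fq B1 B2 = (fun γ => γ * omega2 Fq) '' bddSL2 Fq B2 B1 := by
  have hmul : ∀ γ : SL2 Fq,
      ent Fq (γ * omega2 Fq) 0 0 = ent Fq γ 0 1 ∧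
      ent Fq (γ * omega2 Fq) 1 0 = ent Fq γ 1 1 ∧
      ent Fq (γ * omega2 Fq) 0 1 = -(ent Fq γ 0 0) ∧
      ent Fq (γ * omega2 Fq) 1 1 = -(ent Fq γ 1 0) := by
    intro γ
    refine ⟨?_, ?_, ?_, ?_⟩ <;>
      (rw [ent, ent, Matrix.SpecialLinearGroup.coe_mul]
       simp [omega2, Matrix.mul_apply, Fin.sum_univ_two])
  have hiff : ∀ γ : SL2 Fq, γ * omega2 Fq ∈ bddSL2 Fq B1 B2 ↔ γ ∈ bddSL2 Fq B2 B1 := by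
    intro γ
    obtain ⟨m1, m2, m3, m4⟩ := hmul γ
    rw [mem_bddSL2, mem_bddSL2, m1, m2, m3, m4, polyToL_neg, polyToL_neg,
      labs_neg, labs_neg]
    tauto
  ext γ
  constructor
  · intro hγ
    refine ⟨γ * (omega2 Fq)⁻¹, ?_, by group⟩
    rw [← hiff]
    simpa [mul_assoc] using hγ
  · rintro ⟨δ, hδ, rfl⟩
    exact (hiff δ).mpr hδ

end Stmt19Aux


/-- **Counting lattice matrices with bounded columns.** The number of matrices in
`SL₂(𝔽_q[T])` with first column bounded by `B₁` and second column bounded by `B₂`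
is `O(B₁ B₂)`, with implied constant depending only on `q`. -/
theorem stmt19 : ∃ c : ℝ, 0 < c ∧ ∀ B1 B2 : ℝ, 1 ≤ B1 → 1 ≤ B2 →
    (bddSL2 Fq B1 B2).Finite ∧
    (Nat.card (bddSL2 Fq B1 B2) : ℝ) ≤ c * B1 * B2 := by
  have hq1 : (1:ℝ) < (Fintype.card Fq : ℝ) := by exact_mod_cast Fintype.one_lt_card
  refine ⟨(Fintype.card Fq : ℝ) ^ 4, by positivity, ?_⟩
  intro B1 B2 h1 h2
  rcases le_total B1 B2 with h | h
  · exact key Fq B1 B2 h1 h2 h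
  · obtain ⟨hfin, hcard⟩ := key Fq B2 B1 h2 h1 h
    rw [bddSL2_symm Fq B1 B2]
    refine ⟨hfin.image _, ?_⟩
    rw [Nat.card_image_of_injective (fun x y hxy => mul_right_cancel hxy) (bddSL2 Fq B2 B1)]
    calc (Nat.card ↥(bddSL2 Fq B2 B1) : ℝ)
        ≤ (Fintype.card Fq : ℝ) ^ 4 * B2 * B1 := hcard
      _ = (Fintype.card Fq : ℝ) ^ 4 * B1 * B2 := by ring

end
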